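/- Fix an integer n ≥ 1. If the minimum of ‖W‖_* over all matrices W ∈ ℝ^{(2n+2)×(2n)} satisfying the one-hop margin constraints (without the identity-bridge constraint) is attained, then it is attained by a matrix of symmetric form whose parameters satisfy a1 ≥ 1 and a1+a2+α ≥ b1+b2+β+1. -/

import Mathlib

/-- The nuclear norm of a real matrix: the trace of the positive semidefinite
square root of `Wᵀ * W` (equivalently, the sum of the singular values of `W`). -/
noncomputable def nuclearNorm {m k : Type*} [Fintype m] [Fintype k] [DecidableEq k]
    (W : Matrix m k ℝ) : ℝ :=
  ((Matrix.posSemidef_conjTranspose_mul_self W).1.eigenvectorUnitary.1 *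
    Matrix.diagonal ((√·) ∘ (Matrix.posSemidef_conjTranspose_mul_self W).1.eigenvalues) *
    (star (Matrix.posSemidef_conjTranspose_mul_self W).1.eigenvectorUnitary : Matrix k k ℝ)).trace

/-- The symmetric-form matrix in `ℝ^{(2n+2)×(2n)}`.  Rows are indexed by the input
tokens `a_1,…,a_n` (`Sum.inl i`), `b_1,…,b_n` (`Sum.inr (Sum.inl i)`) and the relation
tokens `r_1, r_2` (`Sum.inr (Sum.inr k)`, `k = 0, 1`); columns by the output tokens
`b_1,…,b_n` (`Sum.inl j`) and `c_1,…,c_n` (`Sum.inr j`). -/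
def symW (n : ℕ) (a1 a2 b1 b2 α β : ℝ) :
    Matrix (Fin n ⊕ Fin n ⊕ Fin 2) (Fin n ⊕ Fin n) ℝ :=
  fun r y =>
    match r, y with
    | Sum.inl i, Sum.inl j => (if i = j then a1 else 0) + a2
    | Sum.inl i, Sum.inr j => (if i = j then b1 else 0) + b2
    | Sum.inr (Sum.inl i), Sum.inl j => (if i = j then b1 else 0) + b2
    | Sum.inr (Sum.inl i), Sum.inr j => (if i = j then a1 else 0) + a2
    | Sum.inr (Sum.inr k), Sum.inl _ => if k = 0 then α else β
    | Sum.inr (Sum.inr k), Sum.inr _ => if k = 0 then β else α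

/-- The one-hop margin constraints: for every `i`,
`W[a_i,b_i] + W[r_1,b_i] ≥ W[a_i,y] + W[r_1,y] + 1` for every output token `y ≠ b_i`, and
`W[b_i,c_i] + W[r_2,c_i] ≥ W[b_i,y] + W[r_2,y] + 1` for every output token `y ≠ c_i`. -/
def OneHopMargin (n : ℕ) (W : Matrix (Fin n ⊕ Fin n ⊕ Fin 2) (Fin n ⊕ Fin n) ℝ) : Prop :=
  ∀ i : Fin n,
    (∀ y : Fin n ⊕ Fin n, y ≠ Sum.inl i →
      W (Sum.inl i) (Sum.inl i) + W (Sum.inr (Sum.inr 0)) (Sum.inl i)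
        ≥ W (Sum.inl i) y + W (Sum.inr (Sum.inr 0)) y + 1) ∧
    (∀ y : Fin n ⊕ Fin n, y ≠ Sum.inr i →
      W (Sum.inr (Sum.inl i)) (Sum.inr i) + W (Sum.inr (Sum.inr 1)) (Sum.inr i)
        ≥ W (Sum.inr (Sum.inl i)) y + W (Sum.inr (Sum.inr 1)) y + 1)


open Matrix


section NucCore

variable {m k : Type*} [Fintype m] [Fintype k] [DecidableEq k]

namespace NucAux

variable (A : Matrix m k ℝ)

noncomputable def hM : (Aᴴ * A).PosSemidef := Matrix.posSemidef_conjTranspose_mul_self A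
noncomputable def lam : k → ℝ := (hM A).1.eigenvalues
noncomputable def V : Matrix k k ℝ := ((hM A).1.eigenvectorUnitary : Matrix k k ℝ)
noncomputable def v (j : k) : k → ℝ := ⇑((hM A).1.eigenvectorBasis j)

lemma lam_nonneg (j : k) : 0 ≤ lam A j := (hM A).eigenvalues_nonneg j

lemma V_star_mul_self : (V A)ᴴ * V A = 1 := by
  simpa [V, star_eq_conjTranspose] using
    (Matrix.mem_unitaryGroup_iff'.mp ((hM A).1.eigenvectorUnitary).2)

lemma V_mul_self_star : V A * (V A)ᴴ = 1 := by
  simpa [V, star_eq_conjTranspose] using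
    (Matrix.mem_unitaryGroup_iff.mp ((hM A).1.eigenvectorUnitary).2)

lemma V_apply (i j : k) : V A i j = v A j i := rfl

lemma M_mulVec (j : k) : (Aᴴ * A) *ᵥ v A j = lam A j • v A j :=
  (hM A).1.mulVec_eigenvectorBasis j

lemma v_dot_self (j : k) : v A j ⬝ᵥ v A j = 1 := by
  have h := ((hM A).1.eigenvectorBasis.orthonormal).1 j
  have : (inner ℝ ((hM A).1.eigenvectorBasis j) ((hM A).1.eigenvectorBasis j) : ℝ) = 1 := by
    rw [@inner_self_eq_norm_sq_to_K ℝ]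
    rw [h]; norm_num
  rw [← this]
  simp [v, PiLp.inner_apply, dotProduct, mul_comm]
  rw [PiLp.inner_apply] at this
  simpa [mul_comm, pow_two] using this

lemma spectral : Aᴴ * A = V A * diagonal (lam A) * (V A)ᴴ := by
  have := (hM A).1.spectral_theorem
  simpa [V, lam, RCLike.ofReal_real_eq_id, star_eq_conjTranspose] using this

lemma nuclearNorm_eq_sum_sqrt : nuclearNorm A = ∑ j, Real.sqrt (lam A j) := by
  rw [nuclearNorm]
  show (V A * diagonal (fun j => Real.sqrt (lam A j)) * (V A)ᴴ).trace = _
  rw [Matrix.trace_mul_cycle, V_star_mul_self, Matrix.one_mul, Matrix.trace_diagonal]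

end NucAux

end NucCore

section NucCore2
variable {m k : Type*} [Fintype m] [Fintype k] [DecidableEq k]
namespace NucAux

lemma dot_self_nonneg {ι : Type*} [Fintype ι] (x : ι → ℝ) : 0 ≤ x ⬝ᵥ x :=
  Finset.sum_nonneg fun i _ => mul_self_nonneg _

lemma dot_le_sqrt {ι : Type*} [Fintype ι] (x y : ι → ℝ) :
    x ⬝ᵥ y ≤ Real.sqrt (x ⬝ᵥ x) * Real.sqrt (y ⬝ᵥ y) := by
  have h := Finset.sum_mul_sq_le_sq_mul_sq Finset.univ x y
  calc x ⬝ᵥ y ≤ Real.sqrt ((x ⬝ᵥ y)^2) := by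
        rw [Real.sqrt_sq_eq_abs]; exact le_abs_self _
    _ ≤ Real.sqrt ((x ⬝ᵥ x) * (y ⬝ᵥ y)) := by
        apply Real.sqrt_le_sqrt
        simpa [dotProduct, pow_two, Finset.sum_mul_sq_le_sq_mul_sq] using h
    _ = _ := Real.sqrt_mul (dot_self_nonneg x) _

lemma dot_mulVec_self (M : Matrix m k ℝ) (x : k → ℝ) :
    (M *ᵥ x) ⬝ᵥ (M *ᵥ x) = x ⬝ᵥ ((Mᵀ * M) *ᵥ x) := by
  conv_rhs => rw [← Matrix.mulVec_mulVec, Matrix.dotProduct_mulVec, Matrix.vecMul_transpose]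

variable (A : Matrix m k ℝ)

lemma trace_eq_sum_diag (X : Matrix k k ℝ) :
    X.trace = ∑ j, v A j ⬝ᵥ (X *ᵥ v A j) := by
  have h1 : X.trace = ((V A)ᴴ * X * V A).trace := by
    rw [Matrix.trace_mul_cycle, V_mul_self_star, Matrix.one_mul]
  rw [h1, Matrix.trace]
  apply Finset.sum_congr rfl
  intro j _
  simp only [Matrix.diag_apply, Matrix.mul_apply, Matrix.conjTranspose_apply, star_trivial,
    Matrix.mulVec, dotProduct, V_apply, Finset.sum_mul, Finset.mul_sum]
  rw [Finset.sum_comm]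
  exact Finset.sum_congr rfl fun l _ => Finset.sum_congr rfl fun i _ => by ring

lemma Av_dot_Av (j : k) : (A *ᵥ v A j) ⬝ᵥ (A *ᵥ v A j) = lam A j := by
  rw [dot_mulVec_self, ← Matrix.conjTranspose_eq_transpose_of_trivial, M_mulVec,
    dotProduct_smul, v_dot_self, smul_eq_mul, mul_one]

lemma trace_le_nuclear (U : Matrix m k ℝ)
    (hU : ∀ x : k → ℝ, (U *ᵥ x) ⬝ᵥ (U *ᵥ x) ≤ x ⬝ᵥ x) :
    (Uᴴ * A).trace ≤ nuclearNorm A := by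
  rw [trace_eq_sum_diag A, nuclearNorm_eq_sum_sqrt]
  apply Finset.sum_le_sum
  intro j _
  have hrw : v A j ⬝ᵥ ((Uᴴ * A) *ᵥ v A j) = (U *ᵥ v A j) ⬝ᵥ (A *ᵥ v A j) := by
    rw [← Matrix.mulVec_mulVec, Matrix.dotProduct_mulVec,
      Matrix.conjTranspose_eq_transpose_of_trivial, Matrix.vecMul_transpose]
  rw [hrw]
  calc (U *ᵥ v A j) ⬝ᵥ (A *ᵥ v A j)
      ≤ Real.sqrt ((U *ᵥ v A j) ⬝ᵥ (U *ᵥ v A j)) * Real.sqrt ((A *ᵥ v A j) ⬝ᵥ (A *ᵥ v A j)) :=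
        dot_le_sqrt _ _
    _ ≤ 1 * Real.sqrt (lam A j) := by
        rw [Av_dot_Av]
        apply mul_le_mul_of_nonneg_right _ (Real.sqrt_nonneg _)
        calc Real.sqrt ((U *ᵥ v A j) ⬝ᵥ (U *ᵥ v A j)) ≤ Real.sqrt (v A j ⬝ᵥ v A j) :=
              Real.sqrt_le_sqrt (hU _)
          _ = 1 := by rw [v_dot_self]; exact Real.sqrt_one
    _ = Real.sqrt (lam A j) := one_mul _

end NucAux
end NucCore2

section NucCore3
variable {m k : Type*} [Fintype m] [Fintype k] [DecidableEq k]
namespace NucAux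
variable (A : Matrix m k ℝ)

noncomputable def g : k → ℝ := fun j => if lam A j = 0 then 0 else (Real.sqrt (lam A j))⁻¹

noncomputable def U0 : Matrix m k ℝ := A * V A * diagonal (g A) * (V A)ᴴ

lemma g_mul_lam (j : k) : g A j * lam A j = Real.sqrt (lam A j) := by
  by_cases h : lam A j = 0
  · simp [g, h]
  · have hpos : 0 < lam A j := lt_of_le_of_ne (lam_nonneg A j) (Ne.symm h)
    rw [g]; simp only [h, if_false]
    rw [inv_mul_eq_div, eq_comm, eq_div_iff (by positivity), Real.mul_self_sqrt (le_of_lt hpos)]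

lemma g_sq_lam_le (j : k) : g A j * g A j * lam A j ≤ 1 := by
  by_cases h : lam A j = 0
  · simp [g, h]
  · have hpos : 0 < lam A j := lt_of_le_of_ne (lam_nonneg A j) (Ne.symm h)
    simp only [g, h, if_false]
    rw [← mul_inv, Real.mul_self_sqrt (le_of_lt hpos)]
    rw [inv_mul_cancel₀ h]

lemma M_mul_V : Aᴴ * A * V A = V A * diagonal (lam A) := by
  rw [spectral A, Matrix.mul_assoc (V A * diagonal (lam A)) ((V A)ᴴ) (V A), V_star_mul_self,
    Matrix.mul_one]

lemma V_dot_V (p u : k → ℝ) : (V A *ᵥ p) ⬝ᵥ (V A *ᵥ u) = p ⬝ᵥ u := by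
  rw [Matrix.dotProduct_mulVec, ← Matrix.mulVec_transpose, Matrix.mulVec_mulVec,
    ← Matrix.conjTranspose_eq_transpose_of_trivial, V_star_mul_self, Matrix.one_mulVec]

lemma AVq_dot (q : k → ℝ) :
    (A *ᵥ (V A *ᵥ q)) ⬝ᵥ (A *ᵥ (V A *ᵥ q)) = q ⬝ᵥ (diagonal (lam A) *ᵥ q) := by
  rw [dot_mulVec_self, ← Matrix.conjTranspose_eq_transpose_of_trivial,
    Matrix.mulVec_mulVec, M_mul_V, ← Matrix.mulVec_mulVec, V_dot_V]

lemma U0_mulVec (x : k → ℝ) :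
    U0 A *ᵥ x = A *ᵥ (V A *ᵥ (diagonal (g A) *ᵥ ((V A)ᴴ *ᵥ x))) := by
  simp only [U0, ← Matrix.mulVec_mulVec]

lemma trace_U0 : ((U0 A)ᴴ * A).trace = nuclearNorm A := by
  rw [trace_eq_sum_diag A, nuclearNorm_eq_sum_sqrt]
  apply Finset.sum_congr rfl
  intro j _
  have hrw : v A j ⬝ᵥ (((U0 A)ᴴ * A) *ᵥ v A j) = (U0 A *ᵥ v A j) ⬝ᵥ (A *ᵥ v A j) := by
    rw [← Matrix.mulVec_mulVec, Matrix.dotProduct_mulVec,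
      Matrix.conjTranspose_eq_transpose_of_trivial, Matrix.vecMul_transpose]
  rw [hrw, U0_mulVec]
  have h1 : (V A)ᴴ *ᵥ v A j = Pi.single j 1 := by
    have := (hM A).1.star_eigenvectorUnitary_mulVec j
    simpa [Matrix.star_eq_conjTranspose, V, v] using this
  rw [h1]
  have h2 : diagonal (g A) *ᵥ Pi.single j 1 = Pi.single j (g A j) := by
    rw [Matrix.diagonal_mulVec_single, mul_one]
  rw [h2]
  have h3 : V A *ᵥ Pi.single j (g A j) = g A j • v A j := by
    funext i
    simp [Matrix.mulVec_single, V_apply, mul_comm]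
  rw [h3, Matrix.mulVec_smul, smul_dotProduct, Av_dot_Av, smul_eq_mul, g_mul_lam]

lemma U0_contraction (x : k → ℝ) : (U0 A *ᵥ x) ⬝ᵥ (U0 A *ᵥ x) ≤ x ⬝ᵥ x := by
  rw [U0_mulVec]
  set w : k → ℝ := (V A)ᴴ *ᵥ x with hw
  set p : k → ℝ := diagonal (g A) *ᵥ w with hp
  have e1 : (A *ᵥ (V A *ᵥ p)) ⬝ᵥ (A *ᵥ (V A *ᵥ p)) = p ⬝ᵥ (diagonal (lam A) *ᵥ p) :=
    AVq_dot A p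
  have e2 : w ⬝ᵥ w = x ⬝ᵥ x := by
    rw [hw, Matrix.conjTranspose_eq_transpose_of_trivial, dot_mulVec_self,
      Matrix.transpose_transpose, ← Matrix.conjTranspose_eq_transpose_of_trivial,
      V_mul_self_star, Matrix.one_mulVec]
  rw [e1, ← e2]
  apply Finset.sum_le_sum
  intro j _
  simp only [hp, Matrix.mulVec_diagonal]
  nlinarith [mul_nonneg (sub_nonneg.mpr (g_sq_lam_le A j)) (mul_self_nonneg (w j))]

theorem nuclearNorm_add_le (B : Matrix m k ℝ) :
    nuclearNorm (A + B) ≤ nuclearNorm A + nuclearNorm B := by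
  have key : ((U0 (A + B))ᴴ * (A + B)).trace = nuclearNorm (A + B) := trace_U0 (A + B)
  rw [Matrix.mul_add, Matrix.trace_add] at key
  rw [← key]
  exact add_le_add (trace_le_nuclear A _ (U0_contraction (A + B)))
    (trace_le_nuclear B _ (U0_contraction (A + B)))

end NucAux
end NucCore3

section NucCore4
variable {m k : Type*} [Fintype m] [Fintype k] [DecidableEq k]
namespace NucAux

theorem nuclearNorm_zero : nuclearNorm (0 : Matrix m k ℝ) = 0 := by
  have key := trace_U0 (0 : Matrix m k ℝ)
  rw [Matrix.mul_zero, Matrix.trace_zero] at key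
  exact key.symm

theorem nuclearNorm_smul (A : Matrix m k ℝ) (c : ℝ) (hc : 0 ≤ c) :
    nuclearNorm (c • A) = c * nuclearNorm A := by
  apply le_antisymm
  · rw [← trace_U0 (c • A), Matrix.mul_smul, Matrix.trace_smul, smul_eq_mul]
    exact mul_le_mul_of_nonneg_left (trace_le_nuclear A _ (U0_contraction (c • A))) hc
  · rw [← trace_U0 A, ← smul_eq_mul, ← Matrix.trace_smul, ← Matrix.mul_smul]
    exact trace_le_nuclear (c • A) _ (U0_contraction A)

theorem nuclearNorm_sum_le {ι : Type*} (s : Finset ι) (f : ι → Matrix m k ℝ) :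
    nuclearNorm (∑ i ∈ s, f i) ≤ ∑ i ∈ s, nuclearNorm (f i) := by
  classical
  induction s using Finset.induction_on with
  | empty => simp [nuclearNorm_zero]
  | insert a s hx ih =>
    rw [Finset.sum_insert hx, Finset.sum_insert hx]
    exact le_trans (nuclearNorm_add_le _ _) (by linarith)

theorem trace_submatrix_equiv {k' : Type*} [Fintype k'] (M : Matrix k k ℝ) (f : k' ≃ k) :
    (M.submatrix f f).trace = M.trace := by
  simp only [Matrix.trace, Matrix.diag_apply, Matrix.submatrix_apply]
  exact Fintype.sum_equiv f _ _ (fun j => rfl)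

lemma trace_form (U A : Matrix m k ℝ) : (Uᴴ * A).trace = ∑ j, ∑ i, U i j * A i j := by
  simp [Matrix.trace, Matrix.mul_apply]

lemma trace_submatrix_pair {m' k' : Type*} [Fintype m'] [Fintype k'] [DecidableEq k']
    (U A : Matrix m k ℝ) (e : m' ≃ m) (f : k' ≃ k) :
    ((U.submatrix e f)ᴴ * A.submatrix e f).trace = (Uᴴ * A).trace := by
  rw [trace_form, trace_form]
  simp only [Matrix.submatrix_apply]
  calc _ = ∑ j', ∑ i, U i (f j') * A i (f j') :=
        Finset.sum_congr rfl fun j' _ => Equiv.sum_comp e (fun i => U i (f j') * A i (f j'))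
    _ = _ := Equiv.sum_comp f (fun j => ∑ i, U i j * A i j)

lemma dot_comp_equiv {ι ι' : Type*} [Fintype ι] [Fintype ι'] (e : ι' ≃ ι) (x : ι → ℝ) :
    (x ∘ e) ⬝ᵥ (x ∘ e) = x ⬝ᵥ x := by
  simp only [dotProduct, Function.comp_apply]
  exact Equiv.sum_comp e (fun i => x i * x i)

lemma contraction_submatrix {m' k' : Type*} [Fintype m'] [Fintype k'] (U : Matrix m k ℝ)
    (e : m' ≃ m) (f : k' ≃ k) (hU : ∀ x : k → ℝ, (U *ᵥ x) ⬝ᵥ (U *ᵥ x) ≤ x ⬝ᵥ x) (x : k' → ℝ) :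
    (U.submatrix e f *ᵥ x) ⬝ᵥ (U.submatrix e f *ᵥ x) ≤ x ⬝ᵥ x := by
  rw [Matrix.submatrix_mulVec_equiv, dot_comp_equiv e]
  calc _ ≤ (x ∘ f.symm) ⬝ᵥ (x ∘ f.symm) := hU _
    _ = x ⬝ᵥ x := dot_comp_equiv f.symm x

theorem nuclearNorm_submatrix {m' k' : Type*} [Fintype m'] [Fintype k'] [DecidableEq k']
    (A : Matrix m k ℝ) (e : m' ≃ m) (f : k' ≃ k) :
    nuclearNorm (A.submatrix e f) = nuclearNorm A := by
  apply le_antisymm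
  · rw [← trace_U0 (A.submatrix e f)]
    have hsub : ((U0 (A.submatrix e f)).submatrix e.symm f.symm).submatrix e f
        = U0 (A.submatrix e f) := by
      ext i j; simp
    rw [← hsub, trace_submatrix_pair]
    exact trace_le_nuclear A _
      (contraction_submatrix _ e.symm f.symm (U0_contraction (A.submatrix e f)))
  · rw [← trace_U0 A, ← trace_submatrix_pair (U0 A) A e f]
    exact trace_le_nuclear (A.submatrix e f) _ (contraction_submatrix _ e f (U0_contraction A))

end NucAux
end NucCore4

section Sym


namespace SymAux

def rowF (n : ℕ) (σ : Equiv.Perm (Fin n)) (s : Bool) :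
    (Fin n ⊕ Fin n ⊕ Fin 2) → (Fin n ⊕ Fin n ⊕ Fin 2) := fun r =>
  match r with
  | .inl i => if s then .inr (.inl (σ i)) else .inl (σ i)
  | .inr (.inl i) => if s then .inl (σ i) else .inr (.inl (σ i))
  | .inr (.inr k) => if s then .inr (.inr (k + 1)) else .inr (.inr k)

def colF (n : ℕ) (σ : Equiv.Perm (Fin n)) (s : Bool) :
    (Fin n ⊕ Fin n) → (Fin n ⊕ Fin n) := fun y =>
  match y with
  | .inl j => if s then .inr (σ j) else .inl (σ j)
  | .inr j => if s then .inl (σ j) else .inr (σ j)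

lemma rowF_inv (n : ℕ) (σ : Equiv.Perm (Fin n)) (s : Bool) :
    Function.LeftInverse (rowF n σ⁻¹ s) (rowF n σ s) := by
  intro r
  rcases r with i | i | k
  · cases s <;> simp [rowF]
  · cases s <;> simp [rowF]
  · cases s <;> simp [rowF] <;> revert k <;> decide

lemma colF_inv (n : ℕ) (σ : Equiv.Perm (Fin n)) (s : Bool) :
    Function.LeftInverse (colF n σ⁻¹ s) (colF n σ s) := by
  intro y
  rcases y with j | j <;> cases s <;> simp [colF]

def rowE (n : ℕ) (σ : Equiv.Perm (Fin n)) (s : Bool) :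
    (Fin n ⊕ Fin n ⊕ Fin 2) ≃ (Fin n ⊕ Fin n ⊕ Fin 2) :=
  ⟨rowF n σ s, rowF n σ⁻¹ s, rowF_inv n σ s, by have h := rowF_inv n σ⁻¹ s; rw [inv_inv] at h; exact h⟩

def colE (n : ℕ) (σ : Equiv.Perm (Fin n)) (s : Bool) :
    (Fin n ⊕ Fin n) ≃ (Fin n ⊕ Fin n) :=
  ⟨colF n σ s, colF n σ⁻¹ s, colF_inv n σ s, by have h := colF_inv n σ⁻¹ s; rw [inv_inv] at h; exact h⟩

variable (n : ℕ) (W0 : Matrix (Fin n ⊕ Fin n ⊕ Fin 2) (Fin n ⊕ Fin n) ℝ)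

noncomputable def WbarM : Matrix (Fin n ⊕ Fin n ⊕ Fin 2) (Fin n ⊕ Fin n) ℝ :=
  (((Fintype.card (Equiv.Perm (Fin n) × Bool)) : ℝ))⁻¹ •
    ∑ p : Equiv.Perm (Fin n) × Bool, W0.submatrix (rowE n p.1 p.2) (colE n p.1 p.2)

lemma translate_feasible (hW0 : OneHopMargin n W0) (σ : Equiv.Perm (Fin n)) (s : Bool) :
    OneHopMargin n (W0.submatrix (rowE n σ s) (colE n σ s)) := by
  intro i
  constructor
  · intro y hy
    have hy' : colE n σ s y ≠ colE n σ s (Sum.inl i) := fun h => hy ((colE n σ s).injective h)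
    cases s
    · simp only [Matrix.submatrix_apply, rowE, colE, Equiv.coe_fn_mk, rowF, colF, if_neg,
        Bool.false_eq_true, if_false]
      exact (hW0 (σ i)).1 (colF n σ false y) (by simpa [colE, colF] using hy')
    · simp only [Matrix.submatrix_apply, rowE, colE, Equiv.coe_fn_mk, rowF, colF, if_true]
      have h01 : (0 : Fin 2) + 1 = 1 := rfl
      rw [h01]
      exact (hW0 (σ i)).2 (colF n σ true y) (by simpa [colE, colF] using hy')
  · intro y hy
    have hy' : colE n σ s y ≠ colE n σ s (Sum.inr i) := fun h => hy ((colE n σ s).injective h)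
    cases s
    · simp only [Matrix.submatrix_apply, rowE, colE, Equiv.coe_fn_mk, rowF, colF, if_neg,
        Bool.false_eq_true, if_false]
      exact (hW0 (σ i)).2 (colF n σ false y) (by simpa [colE, colF] using hy')
    · simp only [Matrix.submatrix_apply, rowE, colE, Equiv.coe_fn_mk, rowF, colF, if_true]
      have h11 : (1 : Fin 2) + 1 = 0 := rfl
      rw [h11]
      exact (hW0 (σ i)).1 (colF n σ true y) (by simpa [colE, colF] using hy')

lemma card_pos : 0 < ((Fintype.card (Equiv.Perm (Fin n) × Bool)) : ℝ) := by
  have : 0 < Fintype.card (Equiv.Perm (Fin n) × Bool) := Fintype.card_pos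
  exact_mod_cast this

lemma Wbar_margin (hW0 : OneHopMargin n W0) : OneHopMargin n (WbarM n W0) := by
  have hcard := card_pos n
  set Nc : ℝ := ((Fintype.card (Equiv.Perm (Fin n) × Bool)) : ℝ) with hNc
  have havg : ∀ (x1 x2 : Fin n ⊕ Fin n ⊕ Fin 2) (y1 y2 : Fin n ⊕ Fin n),
      (∀ p : Equiv.Perm (Fin n) × Bool,
        (W0.submatrix (rowE n p.1 p.2) (colE n p.1 p.2)) x1 y1 +
        (W0.submatrix (rowE n p.1 p.2) (colE n p.1 p.2)) x2 y1 ≥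
        (W0.submatrix (rowE n p.1 p.2) (colE n p.1 p.2)) x1 y2 +
        (W0.submatrix (rowE n p.1 p.2) (colE n p.1 p.2)) x2 y2 + 1) →
      WbarM n W0 x1 y1 + WbarM n W0 x2 y1 ≥ WbarM n W0 x1 y2 + WbarM n W0 x2 y2 + 1 := by
    intro x1 x2 y1 y2 h
    simp only [WbarM, Matrix.smul_apply, Matrix.sum_apply, smul_eq_mul, ← hNc]
    have hsum : ∑ p : Equiv.Perm (Fin n) × Bool,
        ((W0.submatrix (rowE n p.1 p.2) (colE n p.1 p.2)) x1 y2 +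
         (W0.submatrix (rowE n p.1 p.2) (colE n p.1 p.2)) x2 y2 + 1) ≤
        ∑ p : Equiv.Perm (Fin n) × Bool,
        ((W0.submatrix (rowE n p.1 p.2) (colE n p.1 p.2)) x1 y1 +
         (W0.submatrix (rowE n p.1 p.2) (colE n p.1 p.2)) x2 y1) :=
      Finset.sum_le_sum fun p _ => h p
    rw [Finset.sum_add_distrib, Finset.sum_add_distrib, Finset.sum_const, Finset.card_univ,
      nsmul_eq_mul, mul_one, Finset.sum_add_distrib] at hsum
    have h2 : Nc⁻¹ * (∑ p : Equiv.Perm (Fin n) × Bool,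
        (W0.submatrix (rowE n p.1 p.2) (colE n p.1 p.2)) x1 y2 +
        ∑ p : Equiv.Perm (Fin n) × Bool,
        (W0.submatrix (rowE n p.1 p.2) (colE n p.1 p.2)) x2 y2 + Nc) ≤
        Nc⁻¹ * (∑ p : Equiv.Perm (Fin n) × Bool,
        (W0.submatrix (rowE n p.1 p.2) (colE n p.1 p.2)) x1 y1 +
        ∑ p : Equiv.Perm (Fin n) × Bool,
        (W0.submatrix (rowE n p.1 p.2) (colE n p.1 p.2)) x2 y1) :=
      mul_le_mul_of_nonneg_left hsum (by positivity)
    have h3 : Nc⁻¹ * Nc = 1 := inv_mul_cancel₀ (ne_of_gt hcard)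
    nlinarith [h2, h3]
  intro i
  constructor
  · intro y hy
    exact havg _ _ _ _ fun p => (translate_feasible n W0 hW0 p.1 p.2 i).1 y hy
  · intro y hy
    exact havg _ _ _ _ fun p => (translate_feasible n W0 hW0 p.1 p.2 i).2 y hy

end SymAux
end Sym

namespace SymAux

lemma perm_sum_one {n : ℕ} (f : Fin n → ℝ) (i i' : Fin n) :
    ∑ σ : Equiv.Perm (Fin n), f (σ i) = ∑ σ : Equiv.Perm (Fin n), f (σ i') := by
  have h := Equiv.sum_comp (Equiv.mulRight (Equiv.swap i i'))
    (fun σ : Equiv.Perm (Fin n) => f (σ i))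
  simp only [Equiv.coe_mulRight, Equiv.Perm.mul_apply, Equiv.swap_apply_left] at h
  exact h.symm

lemma exists_perm_pair {n : ℕ} (i j i' j' : Fin n) (hij : i ≠ j) (hij' : i' ≠ j') :
    ∃ π : Equiv.Perm (Fin n), π i = i' ∧ π j = j' := by
  classical
  set τ1 := Equiv.swap i i' with hτ1
  have h1 : τ1 i = i' := Equiv.swap_apply_left i i'
  set j'' := τ1 j with hj''
  have hji : j'' ≠ i' := by
    rw [hj'', ← h1]
    exact fun h => hij (τ1.injective h).symm
  refine ⟨τ1.trans (Equiv.swap j'' j'), ?_, ?_⟩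
  · simp only [Equiv.trans_apply, h1]
    exact Equiv.swap_apply_of_ne_of_ne (Ne.symm hji) hij'
  · simp only [Equiv.trans_apply, ← hj'']
    exact Equiv.swap_apply_left j'' j'

lemma perm_sum_two {n : ℕ} (F : Fin n → Fin n → ℝ) (i j i' j' : Fin n)
    (hij : i ≠ j) (hij' : i' ≠ j') :
    ∑ σ : Equiv.Perm (Fin n), F (σ i) (σ j) = ∑ σ : Equiv.Perm (Fin n), F (σ i') (σ j') := by
  obtain ⟨π, hπ1, hπ2⟩ := exists_perm_pair i' j' i j hij' hij
  have h := Equiv.sum_comp (Equiv.mulRight π)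
    (fun σ : Equiv.Perm (Fin n) => F (σ i') (σ j'))
  simp only [Equiv.coe_mulRight, Equiv.Perm.mul_apply, hπ1, hπ2] at h
  exact h

variable (n : ℕ) (W0 : Matrix (Fin n ⊕ Fin n ⊕ Fin 2) (Fin n ⊕ Fin n) ℝ)

noncomputable def cc : ℝ := (((Fintype.card (Equiv.Perm (Fin n) × Bool)) : ℝ))⁻¹

lemma E1 (i j : Fin n) : WbarM n W0 (Sum.inl i) (Sum.inl j) =
    cc n * ∑ σ : Equiv.Perm (Fin n),
      (W0 (Sum.inl (σ i)) (Sum.inl (σ j)) + W0 (Sum.inr (Sum.inl (σ i))) (Sum.inr (σ j))) := by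
  simp only [WbarM, cc, Matrix.smul_apply, Matrix.sum_apply, Matrix.add_apply, smul_eq_mul,
    Fintype.sum_prod_type, Fintype.sum_bool, Matrix.submatrix_apply, rowE, colE,
    Equiv.coe_fn_mk, rowF, colF, if_true, Bool.false_eq_true, if_false]
  congr 1
  exact Finset.sum_congr rfl fun σ _ => add_comm _ _

lemma E2 (i j : Fin n) : WbarM n W0 (Sum.inr (Sum.inl i)) (Sum.inr j) =
    cc n * ∑ σ : Equiv.Perm (Fin n),
      (W0 (Sum.inl (σ i)) (Sum.inl (σ j)) + W0 (Sum.inr (Sum.inl (σ i))) (Sum.inr (σ j))) := by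
  simp only [WbarM, cc, Matrix.smul_apply, Matrix.sum_apply, Matrix.add_apply, smul_eq_mul,
    Fintype.sum_prod_type, Fintype.sum_bool, Matrix.submatrix_apply, rowE, colE,
    Equiv.coe_fn_mk, rowF, colF, if_true, Bool.false_eq_true, if_false]

lemma E3 (i j : Fin n) : WbarM n W0 (Sum.inl i) (Sum.inr j) =
    cc n * ∑ σ : Equiv.Perm (Fin n),
      (W0 (Sum.inl (σ i)) (Sum.inr (σ j)) + W0 (Sum.inr (Sum.inl (σ i))) (Sum.inl (σ j))) := by
  simp only [WbarM, cc, Matrix.smul_apply, Matrix.sum_apply, Matrix.add_apply, smul_eq_mul,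
    Fintype.sum_prod_type, Fintype.sum_bool, Matrix.submatrix_apply, rowE, colE,
    Equiv.coe_fn_mk, rowF, colF, if_true, Bool.false_eq_true, if_false]
  congr 1
  exact Finset.sum_congr rfl fun σ _ => add_comm _ _

lemma E4 (i j : Fin n) : WbarM n W0 (Sum.inr (Sum.inl i)) (Sum.inl j) =
    cc n * ∑ σ : Equiv.Perm (Fin n),
      (W0 (Sum.inl (σ i)) (Sum.inr (σ j)) + W0 (Sum.inr (Sum.inl (σ i))) (Sum.inl (σ j))) := by
  simp only [WbarM, cc, Matrix.smul_apply, Matrix.sum_apply, Matrix.add_apply, smul_eq_mul,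
    Fintype.sum_prod_type, Fintype.sum_bool, Matrix.submatrix_apply, rowE, colE,
    Equiv.coe_fn_mk, rowF, colF, if_true, Bool.false_eq_true, if_false]

lemma E5 (j : Fin n) : WbarM n W0 (Sum.inr (Sum.inr 0)) (Sum.inl j) =
    cc n * ∑ σ : Equiv.Perm (Fin n),
      (W0 (Sum.inr (Sum.inr 0)) (Sum.inl (σ j)) + W0 (Sum.inr (Sum.inr 1)) (Sum.inr (σ j))) := by
  simp only [WbarM, cc, Matrix.smul_apply, Matrix.sum_apply, Matrix.add_apply, smul_eq_mul,
    Fintype.sum_prod_type, Fintype.sum_bool, Matrix.submatrix_apply, rowE, colE,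
    Equiv.coe_fn_mk, rowF, colF, if_true, Bool.false_eq_true, if_false,
    show (0 : Fin 2) + 1 = 1 from rfl]
  congr 1
  exact Finset.sum_congr rfl fun σ _ => add_comm _ _

lemma E6 (j : Fin n) : WbarM n W0 (Sum.inr (Sum.inr 1)) (Sum.inr j) =
    cc n * ∑ σ : Equiv.Perm (Fin n),
      (W0 (Sum.inr (Sum.inr 0)) (Sum.inl (σ j)) + W0 (Sum.inr (Sum.inr 1)) (Sum.inr (σ j))) := by
  simp only [WbarM, cc, Matrix.smul_apply, Matrix.sum_apply, Matrix.add_apply, smul_eq_mul,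
    Fintype.sum_prod_type, Fintype.sum_bool, Matrix.submatrix_apply, rowE, colE,
    Equiv.coe_fn_mk, rowF, colF, if_true, Bool.false_eq_true, if_false,
    show (1 : Fin 2) + 1 = 0 from rfl]

lemma E7 (j : Fin n) : WbarM n W0 (Sum.inr (Sum.inr 0)) (Sum.inr j) =
    cc n * ∑ σ : Equiv.Perm (Fin n),
      (W0 (Sum.inr (Sum.inr 0)) (Sum.inr (σ j)) + W0 (Sum.inr (Sum.inr 1)) (Sum.inl (σ j))) := by
  simp only [WbarM, cc, Matrix.smul_apply, Matrix.sum_apply, Matrix.add_apply, smul_eq_mul,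
    Fintype.sum_prod_type, Fintype.sum_bool, Matrix.submatrix_apply, rowE, colE,
    Equiv.coe_fn_mk, rowF, colF, if_true, Bool.false_eq_true, if_false,
    show (0 : Fin 2) + 1 = 1 from rfl]
  congr 1
  exact Finset.sum_congr rfl fun σ _ => add_comm _ _

lemma E8 (j : Fin n) : WbarM n W0 (Sum.inr (Sum.inr 1)) (Sum.inl j) =
    cc n * ∑ σ : Equiv.Perm (Fin n),
      (W0 (Sum.inr (Sum.inr 0)) (Sum.inr (σ j)) + W0 (Sum.inr (Sum.inr 1)) (Sum.inl (σ j))) := by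
  simp only [WbarM, cc, Matrix.smul_apply, Matrix.sum_apply, Matrix.add_apply, smul_eq_mul,
    Fintype.sum_prod_type, Fintype.sum_bool, Matrix.submatrix_apply, rowE, colE,
    Equiv.coe_fn_mk, rowF, colF, if_true, Bool.false_eq_true, if_false,
    show (1 : Fin 2) + 1 = 0 from rfl]

end SymAux


namespace SymAux

variable (n : ℕ) (W0 : Matrix (Fin n ⊕ Fin n ⊕ Fin 2) (Fin n ⊕ Fin n) ℝ)

def Fa : Fin n → Fin n → ℝ := fun p q =>
  W0 (Sum.inl p) (Sum.inl q) + W0 (Sum.inr (Sum.inl p)) (Sum.inr q)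
def Gb : Fin n → Fin n → ℝ := fun p q =>
  W0 (Sum.inl p) (Sum.inr q) + W0 (Sum.inr (Sum.inl p)) (Sum.inl q)
def Hc : Fin n → ℝ := fun q =>
  W0 (Sum.inr (Sum.inr 0)) (Sum.inl q) + W0 (Sum.inr (Sum.inr 1)) (Sum.inr q)
def Hd : Fin n → ℝ := fun q =>
  W0 (Sum.inr (Sum.inr 0)) (Sum.inr q) + W0 (Sum.inr (Sum.inr 1)) (Sum.inl q)

lemma E1' (i j : Fin n) : WbarM n W0 (Sum.inl i) (Sum.inl j) =
    cc n * ∑ σ : Equiv.Perm (Fin n), Fa n W0 (σ i) (σ j) := E1 n W0 i j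
lemma E2' (i j : Fin n) : WbarM n W0 (Sum.inr (Sum.inl i)) (Sum.inr j) =
    cc n * ∑ σ : Equiv.Perm (Fin n), Fa n W0 (σ i) (σ j) := E2 n W0 i j
lemma E3' (i j : Fin n) : WbarM n W0 (Sum.inl i) (Sum.inr j) =
    cc n * ∑ σ : Equiv.Perm (Fin n), Gb n W0 (σ i) (σ j) := E3 n W0 i j
lemma E4' (i j : Fin n) : WbarM n W0 (Sum.inr (Sum.inl i)) (Sum.inl j) =
    cc n * ∑ σ : Equiv.Perm (Fin n), Gb n W0 (σ i) (σ j) := E4 n W0 i j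
lemma E5' (j : Fin n) : WbarM n W0 (Sum.inr (Sum.inr 0)) (Sum.inl j) =
    cc n * ∑ σ : Equiv.Perm (Fin n), Hc n W0 (σ j) := E5 n W0 j
lemma E6' (j : Fin n) : WbarM n W0 (Sum.inr (Sum.inr 1)) (Sum.inr j) =
    cc n * ∑ σ : Equiv.Perm (Fin n), Hc n W0 (σ j) := E6 n W0 j
lemma E7' (j : Fin n) : WbarM n W0 (Sum.inr (Sum.inr 0)) (Sum.inr j) =
    cc n * ∑ σ : Equiv.Perm (Fin n), Hd n W0 (σ j) := E7 n W0 j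
lemma E8' (j : Fin n) : WbarM n W0 (Sum.inr (Sum.inr 1)) (Sum.inl j) =
    cc n * ∑ σ : Equiv.Perm (Fin n), Hd n W0 (σ j) := E8 n W0 j

end SymAux

section symWentry
variable (n : ℕ) (a1 a2 b1 b2 α β : ℝ)

lemma symW_aa (i j : Fin n) :
    symW n a1 a2 b1 b2 α β (Sum.inl i) (Sum.inl j) = (if i = j then a1 else 0) + a2 := rfl
lemma symW_ac (i j : Fin n) :
    symW n a1 a2 b1 b2 α β (Sum.inl i) (Sum.inr j) = (if i = j then b1 else 0) + b2 := rfl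
lemma symW_ba (i j : Fin n) :
    symW n a1 a2 b1 b2 α β (Sum.inr (Sum.inl i)) (Sum.inl j) = (if i = j then b1 else 0) + b2 := rfl
lemma symW_bc (i j : Fin n) :
    symW n a1 a2 b1 b2 α β (Sum.inr (Sum.inl i)) (Sum.inr j) = (if i = j then a1 else 0) + a2 := rfl
lemma symW_ra (k : Fin 2) (j : Fin n) :
    symW n a1 a2 b1 b2 α β (Sum.inr (Sum.inr k)) (Sum.inl j) = if k = 0 then α else β := rfl
lemma symW_rc (k : Fin 2) (j : Fin n) :
    symW n a1 a2 b1 b2 α β (Sum.inr (Sum.inr k)) (Sum.inr j) = if k = 0 then β else α := rfl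

end symWentry

namespace SymAux
variable (n : ℕ) (W0 : Matrix (Fin n ⊕ Fin n ⊕ Fin 2) (Fin n ⊕ Fin n) ℝ)

lemma Wbar_eq (hn : 0 < n) :
    ∃ a1 a2 b1 b2 αv βv : ℝ,
      WbarM n W0 = symW n a1 a2 b1 b2 αv βv ∧ (¬ 1 < n → a1 = 1) := by
  classical
  by_cases h2 : 1 < n
  · refine ⟨cc n * (∑ σ : Equiv.Perm (Fin n), Fa n W0 (σ ⟨0,hn⟩) (σ ⟨0,hn⟩))
        - cc n * (∑ σ : Equiv.Perm (Fin n), Fa n W0 (σ ⟨0,hn⟩) (σ ⟨1,h2⟩)),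
      cc n * (∑ σ : Equiv.Perm (Fin n), Fa n W0 (σ ⟨0,hn⟩) (σ ⟨1,h2⟩)),
      cc n * (∑ σ : Equiv.Perm (Fin n), Gb n W0 (σ ⟨0,hn⟩) (σ ⟨0,hn⟩))
        - cc n * (∑ σ : Equiv.Perm (Fin n), Gb n W0 (σ ⟨0,hn⟩) (σ ⟨1,h2⟩)),
      cc n * (∑ σ : Equiv.Perm (Fin n), Gb n W0 (σ ⟨0,hn⟩) (σ ⟨1,h2⟩)),
      cc n * (∑ σ : Equiv.Perm (Fin n), Hc n W0 (σ ⟨0,hn⟩)),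
      cc n * (∑ σ : Equiv.Perm (Fin n), Hd n W0 (σ ⟨0,hn⟩)), ?_, fun h => absurd h2 h⟩
    have hne01 : (⟨0,hn⟩ : Fin n) ≠ ⟨1,h2⟩ := by simp [Fin.ext_iff]
    ext r y
    rcases r with i | i | k
    · rcases y with j | j
      · rw [E1', symW_aa]
        by_cases hij : i = j
        · subst hij
          rw [if_pos rfl, sub_add_cancel]
          congr 1
          exact perm_sum_one (fun p => Fa n W0 p p) i ⟨0,hn⟩
        · rw [if_neg hij, zero_add]
          congr 1
          exact perm_sum_two (Fa n W0) i j ⟨0,hn⟩ ⟨1,h2⟩ hij hne01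
      · rw [E3', symW_ac]
        by_cases hij : i = j
        · subst hij
          rw [if_pos rfl, sub_add_cancel]
          congr 1
          exact perm_sum_one (fun p => Gb n W0 p p) i ⟨0,hn⟩
        · rw [if_neg hij, zero_add]
          congr 1
          exact perm_sum_two (Gb n W0) i j ⟨0,hn⟩ ⟨1,h2⟩ hij hne01
    · rcases y with j | j
      · rw [E4', symW_ba]
        by_cases hij : i = j
        · subst hij
          rw [if_pos rfl, sub_add_cancel]
          congr 1
          exact perm_sum_one (fun p => Gb n W0 p p) i ⟨0,hn⟩
        · rw [if_neg hij, zero_add]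
          congr 1
          exact perm_sum_two (Gb n W0) i j ⟨0,hn⟩ ⟨1,h2⟩ hij hne01
      · rw [E2', symW_bc]
        by_cases hij : i = j
        · subst hij
          rw [if_pos rfl, sub_add_cancel]
          congr 1
          exact perm_sum_one (fun p => Fa n W0 p p) i ⟨0,hn⟩
        · rw [if_neg hij, zero_add]
          congr 1
          exact perm_sum_two (Fa n W0) i j ⟨0,hn⟩ ⟨1,h2⟩ hij hne01
    · rcases y with j | j <;> fin_cases k
      · rw [show ((⟨0, by omega⟩ : Fin 2)) = 0 from rfl, E5', symW_ra, if_pos rfl]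
        congr 1
        exact perm_sum_one (Hc n W0) j ⟨0,hn⟩
      · rw [show ((⟨1, by omega⟩ : Fin 2)) = 1 from rfl, E8', symW_ra,
          if_neg (by decide : ¬ (1 : Fin 2) = 0)]
        congr 1
        exact perm_sum_one (Hd n W0) j ⟨0,hn⟩
      · rw [show ((⟨0, by omega⟩ : Fin 2)) = 0 from rfl, E7', symW_rc, if_pos rfl]
        congr 1
        exact perm_sum_one (Hd n W0) j ⟨0,hn⟩
      · rw [show ((⟨1, by omega⟩ : Fin 2)) = 1 from rfl, E6', symW_rc,
          if_neg (by decide : ¬ (1 : Fin 2) = 0)]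
        congr 1
        exact perm_sum_one (Hc n W0) j ⟨0,hn⟩
  · refine ⟨1, cc n * (∑ σ : Equiv.Perm (Fin n), Fa n W0 (σ ⟨0,hn⟩) (σ ⟨0,hn⟩)) - 1,
      0, cc n * (∑ σ : Equiv.Perm (Fin n), Gb n W0 (σ ⟨0,hn⟩) (σ ⟨0,hn⟩)),
      cc n * (∑ σ : Equiv.Perm (Fin n), Hc n W0 (σ ⟨0,hn⟩)),
      cc n * (∑ σ : Equiv.Perm (Fin n), Hd n W0 (σ ⟨0,hn⟩)), ?_, fun _ => rfl⟩
    have hsub : ∀ i j : Fin n, i = j := by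
      intro i j
      have hi := i.2; have hj := j.2
      apply Fin.ext
      omega
    ext r y
    rcases r with i | i | k
    · rcases y with j | j
      · rw [hsub i j, E1', symW_aa, if_pos rfl,
          show (1 : ℝ) + (cc n * (∑ σ : Equiv.Perm (Fin n), Fa n W0 (σ ⟨0,hn⟩) (σ ⟨0,hn⟩)) - 1)
            = cc n * (∑ σ : Equiv.Perm (Fin n), Fa n W0 (σ ⟨0,hn⟩) (σ ⟨0,hn⟩)) by ring]
        congr 1
        exact perm_sum_one (fun p => Fa n W0 p p) j ⟨0,hn⟩
      · rw [hsub i j, E3', symW_ac, if_pos rfl, zero_add]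
        congr 1
        exact perm_sum_one (fun p => Gb n W0 p p) j ⟨0,hn⟩
    · rcases y with j | j
      · rw [hsub i j, E4', symW_ba, if_pos rfl, zero_add]
        congr 1
        exact perm_sum_one (fun p => Gb n W0 p p) j ⟨0,hn⟩
      · rw [hsub i j, E2', symW_bc, if_pos rfl,
          show (1 : ℝ) + (cc n * (∑ σ : Equiv.Perm (Fin n), Fa n W0 (σ ⟨0,hn⟩) (σ ⟨0,hn⟩)) - 1)
            = cc n * (∑ σ : Equiv.Perm (Fin n), Fa n W0 (σ ⟨0,hn⟩) (σ ⟨0,hn⟩)) by ring]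
        congr 1
        exact perm_sum_one (fun p => Fa n W0 p p) j ⟨0,hn⟩
    · rcases y with j | j <;> fin_cases k
      · rw [show ((⟨0, by omega⟩ : Fin 2)) = 0 from rfl, E5', symW_ra, if_pos rfl]
        congr 1
        exact perm_sum_one (Hc n W0) j ⟨0,hn⟩
      · rw [show ((⟨1, by omega⟩ : Fin 2)) = 1 from rfl, E8', symW_ra,
          if_neg (by decide : ¬ (1 : Fin 2) = 0)]
        congr 1
        exact perm_sum_one (Hd n W0) j ⟨0,hn⟩
      · rw [show ((⟨0, by omega⟩ : Fin 2)) = 0 from rfl, E7', symW_rc, if_pos rfl]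
        congr 1
        exact perm_sum_one (Hd n W0) j ⟨0,hn⟩
      · rw [show ((⟨1, by omega⟩ : Fin 2)) = 1 from rfl, E6', symW_rc,
          if_neg (by decide : ¬ (1 : Fin 2) = 0)]
        congr 1
        exact perm_sum_one (Hc n W0) j ⟨0,hn⟩

lemma Wbar_nuclear_le : nuclearNorm (WbarM n W0) ≤ nuclearNorm W0 := by
  have hc := card_pos n
  rw [WbarM, NucAux.nuclearNorm_smul _ _ (inv_nonneg.mpr (le_of_lt hc))]
  have h1 := NucAux.nuclearNorm_sum_le Finset.univ
    (fun p : Equiv.Perm (Fin n) × Bool => W0.submatrix (rowE n p.1 p.2) (colE n p.1 p.2))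
  have h2 : ∑ p : Equiv.Perm (Fin n) × Bool,
      nuclearNorm (W0.submatrix (rowE n p.1 p.2) (colE n p.1 p.2))
      = (Fintype.card (Equiv.Perm (Fin n) × Bool) : ℝ) * nuclearNorm W0 := by
    rw [Finset.sum_congr rfl fun (p : Equiv.Perm (Fin n) × Bool) _ =>
      NucAux.nuclearNorm_submatrix W0 (rowE n p.1 p.2) (colE n p.1 p.2)]
    rw [Finset.sum_const, Finset.card_univ, nsmul_eq_mul]
  calc (↑(Fintype.card (Equiv.Perm (Fin n) × Bool)))⁻¹ *
      nuclearNorm (∑ p : Equiv.Perm (Fin n) × Bool, W0.submatrix (rowE n p.1 p.2) (colE n p.1 p.2))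
      ≤ (↑(Fintype.card (Equiv.Perm (Fin n) × Bool)))⁻¹ *
        ((Fintype.card (Equiv.Perm (Fin n) × Bool) : ℝ) * nuclearNorm W0) := by
        apply mul_le_mul_of_nonneg_left _ (inv_nonneg.mpr (le_of_lt hc))
        rw [← h2]; exact h1
    _ = nuclearNorm W0 := by
        rw [← mul_assoc, inv_mul_cancel₀ (ne_of_gt hc), one_mul]

end SymAux


/-- Existence of a symmetric-form solution: if the minimum of the nuclear norm over all
matrices satisfying the one-hop margin constraints (without the identity-bridge
constraint) is attained, then it is attained by a symmetric-form matrix whose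
parameters satisfy `a1 ≥ 1` and `a1+a2+α ≥ b1+b2+β+1`. -/
theorem symmetric_form_solution_without_identity (n : ℕ) (hn : 1 ≤ n)
    (W0 : Matrix (Fin n ⊕ Fin n ⊕ Fin 2) (Fin n ⊕ Fin n) ℝ)
    (hW0 : OneHopMargin n W0)
    (hmin : ∀ W : Matrix (Fin n ⊕ Fin n ⊕ Fin 2) (Fin n ⊕ Fin n) ℝ,
      OneHopMargin n W → nuclearNorm W0 ≤ nuclearNorm W) :
    ∃ a1 a2 b1 b2 α β : ℝ,
      OneHopMargin n (symW n a1 a2 b1 b2 α β) ∧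
      nuclearNorm (symW n a1 a2 b1 b2 α β) = nuclearNorm W0 ∧
      1 ≤ a1 ∧
      b1 + b2 + β + 1 ≤ a1 + a2 + α := by
  have hmargin := SymAux.Wbar_margin n W0 hW0
  obtain ⟨a1, a2, b1, b2, αv, βv, heq, h1a⟩ := SymAux.Wbar_eq n W0 hn
  have hmargin' : OneHopMargin n (symW n a1 a2 b1 b2 αv βv) := heq ▸ hmargin
  refine ⟨a1, a2, b1, b2, αv, βv, hmargin', ?_, ?_, ?_⟩
  · apply le_antisymm
    · rw [← heq]
      exact SymAux.Wbar_nuclear_le n W0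
    · exact hmin _ hmargin'
  · by_cases h2 : 1 < n
    · have h := (hmargin' ⟨0,hn⟩).1 (Sum.inl ⟨1,h2⟩) (by simp [Fin.ext_iff])
      rw [symW_aa, symW_aa, symW_ra, symW_ra] at h
      simp only [Fin.ext_iff, if_pos, if_true, if_false] at h
      simp [show ¬ (⟨0,hn⟩ : Fin n) = ⟨1,h2⟩ from by simp [Fin.ext_iff]] at h
      linarith
    · linarith [h1a h2]
  · have h := (hmargin' ⟨0,hn⟩).1 (Sum.inr ⟨0,hn⟩) (by simp)
    rw [symW_aa, symW_ac, symW_ra, symW_rc] at h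
    simp at h
    linarith
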